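/- Suppose there exist C > 1, γ ∈ [0,1) and a current-mode-dependent memory controller Ψ_d such that ‖φ(k, σ, x₀, Ψ_d)‖ ≤ C γ^k ‖x₀‖ for all x₀, σ, k. Then the mode-dependent value function V_d(x₀) = inf over current-mode-dependent memory controllers Ψ' of sup over σ of Σ_{k=0}^∞ ‖φ(k, σ, x₀, Ψ')‖ is a norm on ℝⁿ and satisfies ‖x₀‖ ≤ V_d(x₀) ≤ (C/(1−γ)) ‖x₀‖ for all x₀ ∈ ℝⁿ. -/

import Mathlib

open Matrix Filter ENNReal

noncomputable section

/-- State history `[x(k), …, x(0)]` of the closed loop driven by the reversed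
mode list `[i_{k-1}, …, i_0]`, under a current-mode-dependent memory controller `Ψd`
(which also sees the current mode). -/
def memHistD {n m : ℕ} {S : Type*} (A : S → Matrix (Fin n) (Fin n) ℝ)
    (B : S → Matrix (Fin n) (Fin m) ℝ)
    (Ψd : List (EuclideanSpace ℝ (Fin n)) → List S → EuclideanSpace ℝ (Fin m))
    (x0 : EuclideanSpace ℝ (Fin n)) : List S → List (EuclideanSpace ℝ (Fin n))
  | [] => [x0]
  | i :: is =>
      (WithLp.toLp 2 ((A i).mulVec ((memHistD A B Ψd x0 is).headD 0) +
        (B i).mulVec (Ψd (memHistD A B Ψd x0 is) (i :: is)))) :: memHistD A B Ψd x0 is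

section aux

variable {n m : ℕ} {S : Type*} (A : S → Matrix (Fin n) (Fin n) ℝ)
    (B : S → Matrix (Fin n) (Fin m) ℝ)

lemma memHistD_add_headD
    (Ψ₁ Ψ₂ : List (EuclideanSpace ℝ (Fin n)) → List S → EuclideanSpace ℝ (Fin m))
    (x y : EuclideanSpace ℝ (Fin n)) :
    ∀ is : List S,
      ((memHistD A B (fun _ js => Ψ₁ (memHistD A B Ψ₁ x js.tail) js
          + Ψ₂ (memHistD A B Ψ₂ y js.tail) js) (x + y) is).headD 0 : EuclideanSpace ℝ (Fin n))
        = (memHistD A B Ψ₁ x is).headD 0 + (memHistD A B Ψ₂ y is).headD 0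
  | [] => rfl
  | i :: is => by
      simp only [memHistD, List.headD_cons, List.tail_cons]
      rw [memHistD_add_headD Ψ₁ Ψ₂ x y is]
      ext j
      simp [Matrix.mulVec_add]
      ring

lemma memHistD_smul_headD
    (Ψ : List (EuclideanSpace ℝ (Fin n)) → List S → EuclideanSpace ℝ (Fin m))
    (lam : ℝ) (x : EuclideanSpace ℝ (Fin n)) :
    ∀ is : List S,
      ((memHistD A B (fun _ js => lam • Ψ (memHistD A B Ψ x js.tail) js)
          (lam • x) is).headD 0 : EuclideanSpace ℝ (Fin n))
        = lam • (memHistD A B Ψ x is).headD 0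
  | [] => rfl
  | i :: is => by
      simp only [memHistD, List.headD_cons, List.tail_cons]
      rw [memHistD_smul_headD Ψ lam x is]
      ext j
      simp [Matrix.mulVec_smul]

end aux
/-- Closed-loop solution `φ(k, σ, x₀, Ψd)` under the switching signal `σ`:
at each step, `Ψd` receives the current and past states `(x(k), …, x(0))`
and the current and past modes `(σ(k), …, σ(0))`. -/
def memTrajD {n m : ℕ} {S : Type*} (A : S → Matrix (Fin n) (Fin n) ℝ)
    (B : S → Matrix (Fin n) (Fin m) ℝ)
    (Ψd : List (EuclideanSpace ℝ (Fin n)) → List S → EuclideanSpace ℝ (Fin m))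
    (x0 : EuclideanSpace ℝ (Fin n)) (σ : ℕ → S) (k : ℕ) : EuclideanSpace ℝ (Fin n) :=
  (memHistD A B Ψd x0 (((List.range k).reverse).map σ)).headD 0

/-- The mode-dependent value function `V_d(x₀) = inf_{Ψd} sup_σ Σₖ ‖φ(k, σ, x₀, Ψd)‖`
(computed in `ℝ≥0∞` and converted to a real number). -/
def valFunD {n m : ℕ} {S : Type*} (A : S → Matrix (Fin n) (Fin n) ℝ)
    (B : S → Matrix (Fin n) (Fin m) ℝ) (x0 : EuclideanSpace ℝ (Fin n)) : ℝ :=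
  (⨅ Ψd : List (EuclideanSpace ℝ (Fin n)) → List S → EuclideanSpace ℝ (Fin m),
    ⨆ σ : ℕ → S, ∑' k : ℕ, (‖memTrajD A B Ψd x0 σ k‖₊ : ℝ≥0∞)).toReal

section aux2

variable {n m : ℕ} {S : Type*} (A : S → Matrix (Fin n) (Fin n) ℝ)
    (B : S → Matrix (Fin n) (Fin m) ℝ)

def SfunD (Ψ : List (EuclideanSpace ℝ (Fin n)) → List S → EuclideanSpace ℝ (Fin m))
    (x0 : EuclideanSpace ℝ (Fin n)) : ℝ≥0∞ :=
  ⨆ σ : ℕ → S, ∑' k : ℕ, (‖memTrajD A B Ψ x0 σ k‖₊ : ℝ≥0∞)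

def WfunD (x0 : EuclideanSpace ℝ (Fin n)) : ℝ≥0∞ :=
  ⨅ Ψ : List (EuclideanSpace ℝ (Fin n)) → List S → EuclideanSpace ℝ (Fin m),
    SfunD A B Ψ x0

lemma valFunD_eq_toReal (x0 : EuclideanSpace ℝ (Fin n)) :
    valFunD A B x0 = (WfunD A B x0).toReal := rfl

lemma memTrajD_zero (Ψ : List (EuclideanSpace ℝ (Fin n)) → List S → EuclideanSpace ℝ (Fin m))
    (x0 : EuclideanSpace ℝ (Fin n)) (σ : ℕ → S) : memTrajD A B Ψ x0 σ 0 = x0 := by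
  simp [memTrajD, memHistD]

end aux2

/-- Under exponential stabilizability by a current-mode-dependent
memory controller, the mode-dependent value function is a norm on `ℝⁿ` and is
sandwiched between `‖x₀‖` and `(C/(1-γ))‖x₀‖`. -/
theorem valFunD_norm_sandwich {n m : ℕ} (hn : 0 < n) (hm : 0 < m) {S : Type*} [Fintype S] [Nonempty S]
    (A : S → Matrix (Fin n) (Fin n) ℝ) (B : S → Matrix (Fin n) (Fin m) ℝ)
    (C γ : ℝ) (hC : 1 < C) (hγ : γ ∈ Set.Ico (0 : ℝ) 1)
    (Ψd : List (EuclideanSpace ℝ (Fin n)) → List S → EuclideanSpace ℝ (Fin m))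
    (hΨd : ∀ (x0 : EuclideanSpace ℝ (Fin n)) (σ : ℕ → S) (k : ℕ),
      ‖memTrajD A B Ψd x0 σ k‖ ≤ C * γ ^ k * ‖x0‖) :
    ((valFunD A B (0 : EuclideanSpace ℝ (Fin n)) = 0 ∧
        ∀ x : EuclideanSpace ℝ (Fin n), x ≠ 0 → 0 < valFunD A B x) ∧
      (∀ (lam : ℝ) (x : EuclideanSpace ℝ (Fin n)),
        valFunD A B (lam • x) = |lam| * valFunD A B x) ∧
      (∀ x y : EuclideanSpace ℝ (Fin n),
        valFunD A B (x + y) ≤ valFunD A B x + valFunD A B y)) ∧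
    (∀ x0 : EuclideanSpace ℝ (Fin n),
      ‖x0‖ ≤ valFunD A B x0 ∧ valFunD A B x0 ≤ C / (1 - γ) * ‖x0‖) := by
  obtain ⟨hγ0, hγ1⟩ := hγ
  have hC0 : (0:ℝ) ≤ C := by linarith
  have h1γ : (0:ℝ) < 1 - γ := by linarith
  have hCγ : (0:ℝ) ≤ C / (1 - γ) := div_nonneg hC0 h1γ.le
  -- summability of the geometric majorant
  have hsum : ∀ x : EuclideanSpace ℝ (Fin n), Summable (fun k : ℕ => C * γ ^ k * ‖x‖) := by
    intro x
    have := ((summable_geometric_of_lt_one hγ0 hγ1).mul_left C).mul_right ‖x‖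
    simpa [mul_assoc, mul_comm, mul_left_comm] using this
  have htsum : ∀ x : EuclideanSpace ℝ (Fin n),
      (∑' k : ℕ, C * γ ^ k * ‖x‖) = C / (1 - γ) * ‖x‖ := by
    intro x
    have h : (fun k : ℕ => C * γ ^ k * ‖x‖) = fun k : ℕ => (C * ‖x‖) * γ ^ k := by
      funext k; ring
    rw [h, tsum_mul_left, tsum_geometric_of_lt_one hγ0 hγ1]
    field_simp
  -- upper bound on the given controller
  have hSd : ∀ x : EuclideanSpace ℝ (Fin n),
      SfunD A B Ψd x ≤ ENNReal.ofReal (C / (1 - γ) * ‖x‖) := by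
    intro x
    refine iSup_le fun σ => ?_
    calc ∑' k : ℕ, (‖memTrajD A B Ψd x σ k‖₊ : ℝ≥0∞)
        ≤ ∑' k : ℕ, ENNReal.ofReal (C * γ ^ k * ‖x‖) := by
          refine ENNReal.tsum_le_tsum fun k => ?_
          rw [← enorm_eq_nnnorm, ← ofReal_norm_eq_enorm]
          exact ENNReal.ofReal_le_ofReal (hΨd x σ k)
      _ = ENNReal.ofReal (∑' k : ℕ, C * γ ^ k * ‖x‖) := by
          refine (ENNReal.ofReal_tsum_of_nonneg (fun k => ?_) (hsum x)).symm
          exact mul_nonneg (mul_nonneg hC0 (pow_nonneg hγ0 _)) (norm_nonneg _)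
      _ = ENNReal.ofReal (C / (1 - γ) * ‖x‖) := by rw [htsum x]
  have hWle : ∀ x : EuclideanSpace ℝ (Fin n),
      WfunD A B x ≤ ENNReal.ofReal (C / (1 - γ) * ‖x‖) :=
    fun x => (iInf_le _ Ψd).trans (hSd x)
  have hWne : ∀ x : EuclideanSpace ℝ (Fin n), WfunD A B x ≠ ⊤ :=
    fun x => ne_top_of_le_ne_top ENNReal.ofReal_ne_top (hWle x)
  have hleW : ∀ x : EuclideanSpace ℝ (Fin n), (‖x‖₊ : ℝ≥0∞) ≤ WfunD A B x := by
    intro x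
    refine le_iInf fun Ψ => ?_
    have h0 := ENNReal.le_tsum
      (f := fun k : ℕ => (‖memTrajD A B Ψ x (fun _ => Classical.arbitrary S) k‖₊ : ℝ≥0∞)) 0
    rw [memTrajD_zero] at h0
    exact h0.trans (le_iSup (fun σ : ℕ → S =>
      ∑' k : ℕ, (‖memTrajD A B Ψ x σ k‖₊ : ℝ≥0∞)) _)
  -- sandwich
  have hupper : ∀ x : EuclideanSpace ℝ (Fin n), valFunD A B x ≤ C / (1 - γ) * ‖x‖ := by
    intro x
    rw [valFunD_eq_toReal]
    calc (WfunD A B x).toReal ≤ (ENNReal.ofReal (C / (1 - γ) * ‖x‖)).toReal :=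
          ENNReal.toReal_mono ENNReal.ofReal_ne_top (hWle x)
      _ = C / (1 - γ) * ‖x‖ := ENNReal.toReal_ofReal (mul_nonneg hCγ (norm_nonneg x))
  have hlower : ∀ x : EuclideanSpace ℝ (Fin n), ‖x‖ ≤ valFunD A B x := by
    intro x
    rw [valFunD_eq_toReal]
    have := ENNReal.toReal_mono (hWne x) (hleW x)
    simpa using this
  -- value at 0
  have hW0 : WfunD A B (0 : EuclideanSpace ℝ (Fin n)) = 0 :=
    le_antisymm (by simpa using hWle 0) zero_le
  have hval0 : valFunD A B (0 : EuclideanSpace ℝ (Fin n)) = 0 := by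
    rw [valFunD_eq_toReal, hW0]; rfl
  -- homogeneity at the ℝ≥0∞ level
  have hWsmul : ∀ (lam : ℝ) (x : EuclideanSpace ℝ (Fin n)),
      WfunD A B (lam • x) ≤ (‖lam‖₊ : ℝ≥0∞) * WfunD A B x := by
    intro lam x
    have key : ∀ Ψ : List (EuclideanSpace ℝ (Fin n)) → List S → EuclideanSpace ℝ (Fin m),
        WfunD A B (lam • x) ≤ (‖lam‖₊ : ℝ≥0∞) * SfunD A B Ψ x := by
      intro Ψ
      refine (iInf_le _ (fun _ js => lam • Ψ (memHistD A B Ψ x js.tail) js)).trans ?_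
      refine iSup_le fun σ => ?_
      have htr : ∀ k : ℕ,
          memTrajD A B (fun _ js => lam • Ψ (memHistD A B Ψ x js.tail) js) (lam • x) σ k
            = lam • memTrajD A B Ψ x σ k :=
        fun k => memHistD_smul_headD A B Ψ lam x _
      calc ∑' k : ℕ, (‖memTrajD A B (fun _ js => lam • Ψ (memHistD A B Ψ x js.tail) js)
              (lam • x) σ k‖₊ : ℝ≥0∞)
          = ∑' k : ℕ, (‖lam‖₊ : ℝ≥0∞) * (‖memTrajD A B Ψ x σ k‖₊ : ℝ≥0∞) := by
            refine tsum_congr fun k => ?_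
            rw [htr k, nnnorm_smul]
            push_cast
            ring
        _ = (‖lam‖₊ : ℝ≥0∞) * ∑' k : ℕ, (‖memTrajD A B Ψ x σ k‖₊ : ℝ≥0∞) :=
            ENNReal.tsum_mul_left
        _ ≤ (‖lam‖₊ : ℝ≥0∞) * SfunD A B Ψ x := by
            exact mul_le_mul_right (le_iSup (fun σ : ℕ → S =>
              ∑' k : ℕ, (‖memTrajD A B Ψ x σ k‖₊ : ℝ≥0∞)) σ) _
    have h2 : WfunD A B (lam • x) ≤ ⨅ Ψ, (‖lam‖₊ : ℝ≥0∞) * SfunD A B Ψ x := le_iInf key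
    rcases eq_or_ne lam 0 with rfl | hlam
    · simpa using h2.trans (iInf_le _ Ψd)
    · rwa [← ENNReal.mul_iInf_of_ne (by simpa using hlam) ENNReal.coe_ne_top] at h2
  have hhom : ∀ (lam : ℝ) (x : EuclideanSpace ℝ (Fin n)),
      valFunD A B (lam • x) = |lam| * valFunD A B x := by
    intro lam x
    rcases eq_or_ne lam 0 with rfl | hlam
    · simp [hval0]
    · have h1 := hWsmul lam x
      have h2 := hWsmul lam⁻¹ (lam • x)
      rw [inv_smul_smul₀ hlam] at h2
      have hfin1 : (‖lam‖₊ : ℝ≥0∞) * WfunD A B x ≠ ⊤ :=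
        ENNReal.mul_ne_top ENNReal.coe_ne_top (hWne x)
      have hfin2 : (‖lam⁻¹‖₊ : ℝ≥0∞) * WfunD A B (lam • x) ≠ ⊤ :=
        ENNReal.mul_ne_top ENNReal.coe_ne_top (hWne _)
      apply le_antisymm
      · rw [valFunD_eq_toReal, valFunD_eq_toReal]
        calc (WfunD A B (lam • x)).toReal
            ≤ ((‖lam‖₊ : ℝ≥0∞) * WfunD A B x).toReal := ENNReal.toReal_mono hfin1 h1
          _ = |lam| * (WfunD A B x).toReal := by
              rw [ENNReal.toReal_mul]
              simp [Real.norm_eq_abs]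
      · have h3 := ENNReal.toReal_mono hfin2 h2
        rw [ENNReal.toReal_mul] at h3
        simp only [ENNReal.coe_toReal, coe_nnnorm, Real.norm_eq_abs, abs_inv] at h3
        rw [valFunD_eq_toReal, valFunD_eq_toReal]
        have habs : (0:ℝ) < |lam| := abs_pos.mpr hlam
        calc |lam| * (WfunD A B x).toReal
            ≤ |lam| * (|lam|⁻¹ * (WfunD A B (lam • x)).toReal) :=
              mul_le_mul_of_nonneg_left h3 (abs_nonneg lam)
          _ = (WfunD A B (lam • x)).toReal := by field_simp
  -- triangle inequality
  have htriW : ∀ x y : EuclideanSpace ℝ (Fin n),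
      WfunD A B (x + y) ≤ WfunD A B x + WfunD A B y := by
    intro x y
    have key : ∀ Ψ₁ Ψ₂ : List (EuclideanSpace ℝ (Fin n)) → List S → EuclideanSpace ℝ (Fin m),
        WfunD A B (x + y) ≤ SfunD A B Ψ₁ x + SfunD A B Ψ₂ y := by
      intro Ψ₁ Ψ₂
      refine (iInf_le _ (fun _ js =>
        Ψ₁ (memHistD A B Ψ₁ x js.tail) js + Ψ₂ (memHistD A B Ψ₂ y js.tail) js)).trans ?_
      refine iSup_le fun σ => ?_
      have htr : ∀ k : ℕ,
          memTrajD A B (fun _ js =>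
              Ψ₁ (memHistD A B Ψ₁ x js.tail) js + Ψ₂ (memHistD A B Ψ₂ y js.tail) js)
            (x + y) σ k
            = memTrajD A B Ψ₁ x σ k + memTrajD A B Ψ₂ y σ k :=
        fun k => memHistD_add_headD A B Ψ₁ Ψ₂ x y _
      calc ∑' k : ℕ, (‖memTrajD A B (fun _ js =>
              Ψ₁ (memHistD A B Ψ₁ x js.tail) js + Ψ₂ (memHistD A B Ψ₂ y js.tail) js)
              (x + y) σ k‖₊ : ℝ≥0∞)
          ≤ ∑' k : ℕ, ((‖memTrajD A B Ψ₁ x σ k‖₊ : ℝ≥0∞) + (‖memTrajD A B Ψ₂ y σ k‖₊ : ℝ≥0∞)) := by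
            refine ENNReal.tsum_le_tsum fun k => ?_
            rw [htr k]
            exact_mod_cast nnnorm_add_le _ _
        _ = (∑' k : ℕ, (‖memTrajD A B Ψ₁ x σ k‖₊ : ℝ≥0∞))
              + ∑' k : ℕ, (‖memTrajD A B Ψ₂ y σ k‖₊ : ℝ≥0∞) := ENNReal.tsum_add
        _ ≤ SfunD A B Ψ₁ x + SfunD A B Ψ₂ y := by
            exact add_le_add
              (le_iSup (fun σ : ℕ → S => ∑' k : ℕ, (‖memTrajD A B Ψ₁ x σ k‖₊ : ℝ≥0∞)) σ)
              (le_iSup (fun σ : ℕ → S => ∑' k : ℕ, (‖memTrajD A B Ψ₂ y σ k‖₊ : ℝ≥0∞)) σ)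
    have expand : WfunD A B x + WfunD A B y
        = ⨅ Ψ₁, ⨅ Ψ₂, (SfunD A B Ψ₁ x + SfunD A B Ψ₂ y) := by
      unfold WfunD
      rw [ENNReal.iInf_add]
      exact iInf_congr fun Ψ₁ => ENNReal.add_iInf
    rw [expand]
    exact le_iInf fun Ψ₁ => le_iInf fun Ψ₂ => key Ψ₁ Ψ₂
  have htri : ∀ x y : EuclideanSpace ℝ (Fin n),
      valFunD A B (x + y) ≤ valFunD A B x + valFunD A B y := by
    intro x y
    rw [valFunD_eq_toReal, valFunD_eq_toReal, valFunD_eq_toReal]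
    have hfin : WfunD A B x + WfunD A B y ≠ ⊤ :=
      ENNReal.add_ne_top.mpr ⟨hWne x, hWne y⟩
    calc (WfunD A B (x + y)).toReal
        ≤ (WfunD A B x + WfunD A B y).toReal := ENNReal.toReal_mono hfin (htriW x y)
      _ = (WfunD A B x).toReal + (WfunD A B y).toReal :=
          ENNReal.toReal_add (hWne x) (hWne y)
  refine ⟨⟨⟨hval0, fun x hx => ?_⟩, hhom, htri⟩, fun x => ⟨hlower x, hupper x⟩⟩
  exact lt_of_lt_of_le (norm_pos_iff.mpr hx) (hlower x)
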